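/- Let $S$ be a finite set and let $A^1,\dots,A^m$ be compact Polish spaces. Fix a probability measure $\mu$ on $S$. Define $\Xi^\mu$ on the set of tuples $(\hat a^1,\dots,\hat a^m)$ of probability measures on $S\times A^i$ with $S$-marginal $\mu$ by $\Xi^\mu[\hat{\underline a}](\{s\}\times B_1\times\cdots\times B_m)=\mu(\{s\})\prod_{i=1}^m \hat a^i(B_i\mid s)$ (with the convention $\hat a^i(\cdot\mid s)$ arbitrary fixed when $\mu(\{s\})=0$). Then $\Xi^\mu$ is continuous for the weak topologies. -/

import Mathlib

open MeasureTheory Filter Topology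



lemma my_integral_pi_prod {ι : Type*} [Fintype ι] {E : ι → Type*}
    [∀ i, MeasurableSpace (E i)] (ν : ∀ i, Measure (E i))
    [∀ i, IsProbabilityMeasure (ν i)] (f : ∀ i, E i → ℝ) :
    ∫ x : ∀ i, E i, ∏ i, f i (x i) ∂Measure.pi ν = ∏ i, ∫ x, f i x ∂ν i := by
  letI : ∀ i, MeasureSpace (E i) := fun i => { volume := ν i }
  exact integral_fintype_prod_eq_prod f

noncomputable def mySlice {S X : Type*} [MeasurableSpace S] [MeasurableSpace X]
    (ρ : Measure (S × X)) (s : S) : Measure X :=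
  (ρ.restrict ({s} ×ˢ Set.univ)).map Prod.snd

section
variable {S : Type*} [MeasurableSpace S] [MeasurableSingletonClass S]

lemma mySlice_apply {X : Type*} [MeasurableSpace X] (ρ : Measure (S × X)) (s : S)
    {B : Set X} (hB : MeasurableSet B) : mySlice ρ s B = ρ ({s} ×ˢ B) := by
  rw [mySlice, Measure.map_apply measurable_snd hB,
    Measure.restrict_apply (measurable_snd hB)]
  congr 1
  ext ⟨u, v⟩
  simp [and_comm]

lemma marg_apply {X : Type*} [MeasurableSpace X] (μ : Measure S) (a : Measure (S × X))
    (h : a.map Prod.fst = μ) (s : S) : a ({s} ×ˢ (Set.univ : Set X)) = μ {s} := by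
  rw [← h, Measure.map_apply measurable_fst (measurableSet_singleton s)]
  congr 1
  ext p
  simp [Prod.ext_iff, eq_comm]

end

section main
variable {m : ℕ}
    {S : Type*} [Fintype S] [TopologicalSpace S] [DiscreteTopology S]
    [MeasurableSpace S] [BorelSpace S]
    {A : Fin m → Type*} [∀ i, TopologicalSpace (A i)] [∀ i, PolishSpace (A i)]
    [∀ i, CompactSpace (A i)] [∀ i, MeasurableSpace (A i)] [∀ i, BorelSpace (A i)]
    (μ : Measure S) [IsProbabilityMeasure μ]

/-- the conditional measures are probability measures -/
lemma cond_prob (a : ∀ i, Measure (S × A i)) (hm : ∀ i, (a i).map Prod.fst = μ)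
    (s : S) (hs : 0 < μ {s}) (i : Fin m) :
    IsProbabilityMeasure ((μ {s})⁻¹ • mySlice (a i) s) := by
  constructor
  rw [Measure.smul_apply, smul_eq_mul, mySlice_apply _ _ MeasurableSet.univ,
    marg_apply μ (a i) (hm i) s]
  exact ENNReal.inv_mul_cancel hs.ne' (measure_ne_top μ _)

/-- slice of the reconstructed measure is the product of conditional slices -/
lemma slice_eq_pi (ρ : Measure (S × (∀ i, A i))) (a : ∀ i, Measure (S × A i))
    (hm : ∀ i, (a i).map Prod.fst = μ)
    (s : S) (hs : 0 < μ {s})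
    (hXi : ∀ B : ∀ i, Set (A i), (∀ i, MeasurableSet (B i)) →
        ρ ({s} ×ˢ Set.univ.pi B) = μ {s} * ∏ i, (a i ({s} ×ˢ B i) / μ {s})) :
    mySlice ρ s = μ {s} • Measure.pi (fun i => (μ {s})⁻¹ • mySlice (a i) s) := by
  haveI : ∀ i, IsProbabilityMeasure ((μ {s})⁻¹ • mySlice (a i) s) :=
    cond_prob μ a hm s hs
  have h0 : μ {s} ≠ 0 := hs.ne'
  have hT : μ {s} ≠ ⊤ := measure_ne_top μ _
  have key : Measure.pi (fun i => (μ {s})⁻¹ • mySlice (a i) s)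
      = (μ {s})⁻¹ • mySlice ρ s := by
    refine Measure.pi_eq fun B hB => ?_
    rw [Measure.smul_apply, smul_eq_mul,
      mySlice_apply _ _ (MeasurableSet.univ_pi hB), hXi B hB, ← mul_assoc,
      ENNReal.inv_mul_cancel h0 hT, one_mul]
    refine Finset.prod_congr rfl fun i _ => ?_
    rw [Measure.smul_apply, smul_eq_mul, mySlice_apply _ _ (hB i),
      ENNReal.div_eq_inv_mul]
  rw [key, smul_smul, ENNReal.mul_inv_cancel h0 hT, one_smul]

lemma slice_zero {X : Type*} [MeasurableSpace X] (ρ : Measure (S × X))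
    [IsProbabilityMeasure ρ]
    (hpos : ∀ s : S, 0 < μ {s} → ρ ({s} ×ˢ (Set.univ : Set X)) = μ {s})
    (s : S) (hs : μ {s} = 0) : ρ ({s} ×ˢ (Set.univ : Set X)) = 0 := by
  classical
  have hdisj : Pairwise (Function.onFun Disjoint
      (fun s : S => ({s} ×ˢ (Set.univ : Set X)))) := by
    intro u v huv
    refine Set.disjoint_left.2 ?_
    rintro ⟨a, b⟩ ha hb
    simp only [Set.mem_prod, Set.mem_singleton_iff] at ha hb
    exact huv (ha.1.symm.trans hb.1)
  have hmeas : ∀ u : S, MeasurableSet (({u} ×ˢ (Set.univ : Set X))) :=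
    fun u => (measurableSet_singleton u).prod MeasurableSet.univ
  have hUnion : (⋃ u : S, ({u} ×ˢ (Set.univ : Set X))) = Set.univ := by
    ext ⟨a, b⟩; simp
  have hρ : ∑ u : S, ρ ({u} ×ˢ (Set.univ : Set X)) = 1 := by
    rw [← measure_univ (μ := ρ), ← hUnion, measure_iUnion hdisj hmeas, tsum_fintype]
  have hμ : ∑ u : S, μ {u} = 1 := by
    have hU2 : (⋃ u : S, ({u} : Set S)) = Set.univ := by ext u; simp
    rw [← measure_univ (μ := μ), ← hU2,
      measure_iUnion (fun u v huv => by simpa [Set.disjoint_left] using huv)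
        (fun u => measurableSet_singleton u), tsum_fintype]
  classical
  have h1 := Finset.sum_filter_add_sum_filter_not Finset.univ (fun u => 0 < μ {u})
    (fun u => ρ ({u} ×ˢ (Set.univ : Set X)))
  have h2 := Finset.sum_filter_add_sum_filter_not Finset.univ (fun u => 0 < μ {u})
    (fun u => μ {u})
  have hPeq : ∑ u ∈ Finset.univ.filter (fun u => 0 < μ {u}), ρ ({u} ×ˢ (Set.univ : Set X))
      = ∑ u ∈ Finset.univ.filter (fun u => 0 < μ {u}), μ {u} := by
    refine Finset.sum_congr rfl fun u hu => ?_
    simp only [Finset.mem_filter, Finset.mem_univ, true_and] at hu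
    exact hpos u hu
  have hμcompl : ∑ u ∈ Finset.univ.filter (fun u => ¬ 0 < μ {u}), μ {u} = 0 :=
    Finset.sum_eq_zero fun u hu => by
      simp only [Finset.mem_filter, Finset.mem_univ, true_and, not_lt,
        nonpos_iff_eq_zero] at hu
      exact hu
  have hfin : (∑ u ∈ Finset.univ.filter (fun u => 0 < μ {u}), μ {u}) ≠ ⊤ := by
    intro h
    rw [h] at h2
    rw [hμ] at h2
    simp at h2
  have hPμ : ∑ u ∈ Finset.univ.filter (fun u => 0 < μ {u}), μ {u} = 1 := by
    rw [hμcompl, add_zero] at h2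
    exact h2.trans hμ
  have hkey : ∑ u ∈ Finset.univ.filter (fun u => ¬ 0 < μ {u}),
      ρ ({u} ×ˢ (Set.univ : Set X)) = 0 := by
    refine (ENNReal.add_right_inj hfin).1 ?_
    calc (∑ u ∈ Finset.univ.filter (fun u => 0 < μ {u}), μ {u})
          + ∑ u ∈ Finset.univ.filter (fun u => ¬ 0 < μ {u}), ρ ({u} ×ˢ (Set.univ : Set X))
        = (∑ u ∈ Finset.univ.filter (fun u => 0 < μ {u}), ρ ({u} ×ˢ (Set.univ : Set X)))
          + ∑ u ∈ Finset.univ.filter (fun u => ¬ 0 < μ {u}), ρ ({u} ×ˢ (Set.univ : Set X)) := by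
          rw [hPeq]
      _ = 1 := by rw [h1, hρ]
      _ = (∑ u ∈ Finset.univ.filter (fun u => 0 < μ {u}), μ {u}) + 0 := by
          rw [add_zero, hPμ]
  refine (Finset.sum_eq_zero_iff.1 hkey) s ?_
  simp [hs]


lemma tensor_integral (ρ : Measure (S × (∀ i, A i))) [IsProbabilityMeasure ρ]
    (a : ∀ i, Measure (S × A i)) (hp : ∀ i, IsProbabilityMeasure (a i))
    (hm : ∀ i, (a i).map Prod.fst = μ)
    (hXi : ∀ s : S, 0 < μ {s} →
      ∀ B : ∀ i, Set (A i), (∀ i, MeasurableSet (B i)) →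
        ρ ({s} ×ˢ Set.univ.pi B) = μ {s} * ∏ i, (a i ({s} ×ˢ B i) / μ {s}))
    (φ : S → ℝ) (f : ∀ i, C(A i, ℝ)) :
    ∫ p, φ p.1 * ∏ i, f i (p.2 i) ∂ρ
      = ∑ s : S, φ s * ((μ {s}).toReal *
          ∏ i, ((μ {s}).toReal⁻¹ * ∫ p in ({s} ×ˢ (Set.univ : Set (A i))), f i p.2 ∂(a i))) := by
  classical
  have hcontF : Continuous (fun x : ∀ i, A i => ∏ i, f i (x i)) := by
    exact continuous_finset_prod _ fun i _ => (f i).continuous.comp (continuous_apply i)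
  have hcontg : Continuous (fun p : S × (∀ i, A i) => φ p.1 * ∏ i, f i (p.2 i)) := by
    exact ((continuous_of_discreteTopology (f := φ)).comp continuous_fst).mul
      (hcontF.comp continuous_snd)
  have hint : Integrable (fun p : S × (∀ i, A i) => φ p.1 * ∏ i, f i (p.2 i)) ρ :=
    (BoundedContinuousFunction.mkOfCompact ⟨_, hcontg⟩).integrable ρ
  have hmeas : ∀ u : S, MeasurableSet (({u} ×ˢ (Set.univ : Set (∀ i, A i)))) :=
    fun u => (measurableSet_singleton u).prod MeasurableSet.univ
  have hdisj : Pairwise (Function.onFun Disjoint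
      (fun s : S => ({s} ×ˢ (Set.univ : Set (∀ i, A i))))) := by
    intro u v huv
    refine Set.disjoint_left.2 ?_
    rintro ⟨x, y⟩ hx hy
    simp only [Set.mem_prod, Set.mem_singleton_iff] at hx hy
    exact huv (hx.1.symm.trans hy.1)
  have hUnion : (⋃ u : S, ({u} ×ˢ (Set.univ : Set (∀ i, A i)))) = Set.univ := by
    ext ⟨x, y⟩; simp
  have hsplit : ∫ p, φ p.1 * ∏ i, f i (p.2 i) ∂ρ
      = ∑ s : S, ∫ p in ({s} ×ˢ (Set.univ : Set (∀ i, A i))),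
          φ p.1 * ∏ i, f i (p.2 i) ∂ρ := by
    rw [← setIntegral_univ, ← hUnion]
    exact integral_iUnion_fintype hmeas hdisj fun s => hint.integrableOn
  rw [hsplit]
  refine Finset.sum_congr rfl fun s _ => ?_
  have hpos : ∀ u : S, 0 < μ {u} → ρ ({u} ×ˢ (Set.univ : Set (∀ i, A i))) = μ {u} := by
    intro u hu
    have h1 : (Set.univ.pi (fun i : Fin m => (Set.univ : Set (A i))))
        = (Set.univ : Set (∀ i, A i)) := by simp
    have h2 : ρ ({u} ×ˢ (Set.univ : Set (∀ i, A i)))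
        = μ {u} * ∏ i, (a i ({u} ×ˢ (Set.univ : Set (A i))) / μ {u}) := by
      simpa [h1] using hXi u hu (fun i => Set.univ) (fun i => MeasurableSet.univ)
    have h3 : ∀ i : Fin m, a i ({u} ×ˢ (Set.univ : Set (A i))) / μ {u} = 1 := by
      intro i
      rw [marg_apply μ (a i) (hm i) u]
      exact ENNReal.div_self hu.ne' (measure_ne_top μ _)
    rw [h2, Finset.prod_congr rfl (fun i _ => h3 i), Finset.prod_const_one, mul_one]
  rcases eq_or_lt_of_le (zero_le : 0 ≤ μ {s}) with hz | hs
  · -- μ {s} = 0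
    have h0 : ρ ({s} ×ˢ (Set.univ : Set (∀ i, A i))) = 0 :=
      slice_zero μ ρ hpos s hz.symm
    rw [Measure.restrict_eq_zero.2 h0, integral_zero_measure, ← hz, ENNReal.toReal_zero]
    ring
  · -- μ {s} > 0
    haveI : ∀ i, IsProbabilityMeasure ((μ {s})⁻¹ • mySlice (a i) s) :=
      cond_prob μ a hm s hs
    have hc : ∫ p in ({s} ×ˢ (Set.univ : Set (∀ i, A i))),
        φ p.1 * ∏ i, f i (p.2 i) ∂ρ
        = φ s * ∫ p in ({s} ×ˢ (Set.univ : Set (∀ i, A i))), ∏ i, f i (p.2 i) ∂ρ := by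
      rw [← integral_const_mul]
      refine setIntegral_congr_fun (hmeas s) fun p hp => ?_
      obtain ⟨hp1, -⟩ := hp
      simp only [Set.mem_singleton_iff] at hp1
      rw [hp1]
    rw [hc]
    congr 1
    have hmap : ∫ p in ({s} ×ˢ (Set.univ : Set (∀ i, A i))), ∏ i, f i (p.2 i) ∂ρ
        = ∫ x, ∏ i, f i (x i) ∂(mySlice ρ s) := by
      rw [mySlice, integral_map measurable_snd.aemeasurable hcontF.aestronglyMeasurable]
    rw [hmap, slice_eq_pi μ ρ a hm s hs (hXi s hs), integral_smul_measure,
      my_integral_pi_prod, smul_eq_mul]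
    congr 1
    refine Finset.prod_congr rfl fun i _ => ?_
    rw [integral_smul_measure, smul_eq_mul, ENNReal.toReal_inv]
    congr 1
    rw [mySlice, integral_map measurable_snd.aemeasurable (f i).continuous.aestronglyMeasurable]


lemma factor_tendsto (ahat : ℕ → ∀ i, Measure (S × A i)) (alim : ∀ i, Measure (S × A i))
    (hweak : ∀ i, ∀ g : BoundedContinuousFunction (S × A i) ℝ,
      Tendsto (fun n => ∫ p, g p ∂(ahat n i)) atTop (𝓝 (∫ p, g p ∂(alim i))))
    (i : Fin m) (s : S) (f : C(A i, ℝ)) :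
    Tendsto (fun n => ∫ p in ({s} ×ˢ (Set.univ : Set (A i))), f p.2 ∂(ahat n i)) atTop
      (𝓝 (∫ p in ({s} ×ˢ (Set.univ : Set (A i))), f p.2 ∂(alim i))) := by
  classical
  have hcont : Continuous (fun p : S × A i =>
      (if p.1 = s then (1:ℝ) else 0) * f p.2) := by
    exact ((continuous_of_discreteTopology
      (f := fun u : S => if u = s then (1:ℝ) else 0)).comp continuous_fst).mul
      (f.continuous.comp continuous_snd)
  have hind : ∀ p : S × A i, (if p.1 = s then (1:ℝ) else 0) * f p.2
      = Set.indicator ({s} ×ˢ (Set.univ : Set (A i))) (fun q => f q.2) p := by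
    rintro ⟨u, x⟩
    by_cases h : u = s
    · subst h; simp [Set.indicator_of_mem, Set.mem_prod]
    · rw [Set.indicator_of_notMem (fun hm => h hm.1)]
      simp [h]
  have hint : ∀ ρ : Measure (S × A i),
      ∫ p, (BoundedContinuousFunction.mkOfCompact ⟨_, hcont⟩) p ∂ρ
        = ∫ p in ({s} ×ˢ (Set.univ : Set (A i))), f p.2 ∂ρ := by
    intro ρ
    rw [← integral_indicator ((measurableSet_singleton s).prod MeasurableSet.univ)]
    exact integral_congr_ae (Filter.Eventually.of_forall fun p => by
      simpa using hind p)
  have := hweak i (BoundedContinuousFunction.mkOfCompact ⟨_, hcont⟩)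
  simpa only [hint] using this

end main

section final
variable {m : ℕ}
    {S : Type*} [Fintype S] [TopologicalSpace S] [DiscreteTopology S]
    [MeasurableSpace S] [BorelSpace S]
    {A : Fin m → Type*} [∀ i, TopologicalSpace (A i)] [∀ i, PolishSpace (A i)]
    [∀ i, CompactSpace (A i)] [∀ i, MeasurableSpace (A i)] [∀ i, BorelSpace (A i)]

/-- the set of pure tensor continuous functions -/
def pureTensors : Set C(S × (∀ i, A i), ℝ) :=
  {h | ∃ (φ : S → ℝ) (f : ∀ i, C(A i, ℝ)), ∀ p, h p = φ p.1 * ∏ i, f i (p.2 i)}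

lemma pureTensors_one : (1 : C(S × (∀ i, A i), ℝ)) ∈ pureTensors := by
  refine ⟨fun _ => 1, fun i => 1, fun p => by simp⟩

lemma pureTensors_mul {h₁ h₂ : C(S × (∀ i, A i), ℝ)}
    (H₁ : h₁ ∈ pureTensors) (H₂ : h₂ ∈ pureTensors) : h₁ * h₂ ∈ pureTensors := by
  obtain ⟨φ₁, f₁, e₁⟩ := H₁
  obtain ⟨φ₂, f₂, e₂⟩ := H₂
  refine ⟨fun u => φ₁ u * φ₂ u, fun i => f₁ i * f₂ i, fun p => ?_⟩
  simp only [ContinuousMap.mul_apply, e₁ p, e₂ p]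
  rw [Finset.prod_mul_distrib]
  ring

/-- the span of pure tensors as a subalgebra -/
noncomputable def tensorAlg : Subalgebra ℝ C(S × (∀ i, A i), ℝ) :=
  (Submodule.span ℝ (pureTensors (S := S) (A := A))).toSubalgebra
    (Submodule.subset_span pureTensors_one)
    (fun x y hx hy => by
      induction hx using Submodule.span_induction generalizing y with
      | mem a ha =>
        induction hy using Submodule.span_induction with
        | mem b hb => exact Submodule.subset_span (pureTensors_mul ha hb)
        | zero => simpa using Submodule.zero_mem _
        | add b c _ _ hb hc => rw [mul_add]; exact Submodule.add_mem _ hb hc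
        | smul r b _ hb => rw [mul_smul_comm]; exact Submodule.smul_mem _ r hb
      | zero => simpa using Submodule.zero_mem _
      | add a b _ _ ha hb => rw [add_mul]; exact Submodule.add_mem _ (ha _ hy) (hb _ hy)
      | smul r a _ ha => rw [smul_mul_assoc]; exact Submodule.smul_mem _ r (ha _ hy))

lemma tensorAlg_separates [Nonempty (∀ i, A i)] :
    (tensorAlg (S := S) (A := A)).SeparatesPoints := by
  classical
  rintro ⟨s₁, x⟩ ⟨s₂, y⟩ hne
  by_cases hs : s₁ = s₂
  · subst hs
    have hxy : x ≠ y := fun h => hne (by rw [h])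
    obtain ⟨j, hj⟩ : ∃ j, x j ≠ y j := by
      by_contra h
      push_neg at h
      exact hxy (funext h)
    letI := TopologicalSpace.upgradeIsCompletelyMetrizable (A j)
    set f : ∀ i, C(A i, ℝ) := fun i =>
      if hij : i = j then ⟨fun z => dist (hij ▸ z) (x j),
        (continuous_id.dist continuous_const).comp (by subst hij; exact continuous_id)⟩
      else 1 with hf
    refine ⟨_, ⟨⟨fun p => ∏ i, f i (p.2 i),
      continuous_finset_prod _ fun i _ => (f i).continuous.comp ((continuous_apply i).comp continuous_snd)⟩,
      Submodule.subset_span ⟨fun _ => 1, f, fun p => by simp⟩, rfl⟩, ?_⟩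
    simp only [ContinuousMap.coe_mk]
    have hval : ∀ z : ∀ i, A i, (∏ i, f i (z i)) = dist (z j) (x j) := by
      intro z
      rw [Finset.prod_eq_single j]
      · simp [hf]
      · intro i _ hij; simp [hf, hij]
      · intro h; exact absurd (Finset.mem_univ j) h
    rw [hval, hval]
    simp only [dist_self]
    intro h
    apply hj
    have h2 : dist (y j) (x j) = 0 := h.symm
    rw [dist_eq_zero] at h2
    exact h2.symm
  · set φ : S → ℝ := fun u => if u = s₁ then 1 else 0 with hφ
    refine ⟨_, ⟨⟨fun p => φ p.1 * ∏ i, (1 : C(A i, ℝ)) (p.2 i),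
      (((continuous_of_discreteTopology (f := φ)).comp continuous_fst).mul
        (by simp only [ContinuousMap.one_apply]; exact continuous_const))⟩,
      Submodule.subset_span ⟨φ, fun i => 1, fun p => rfl⟩, rfl⟩, ?_⟩
    simp [hφ, hs, Ne.symm hs]

end final



section thm
variable {m : ℕ}
    {S : Type*} [Fintype S] [TopologicalSpace S] [DiscreteTopology S]
    [MeasurableSpace S] [BorelSpace S]
    {A : Fin m → Type*} [∀ i, TopologicalSpace (A i)] [∀ i, PolishSpace (A i)]
    [∀ i, CompactSpace (A i)] [∀ i, MeasurableSpace (A i)] [∀ i, BorelSpace (A i)]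

lemma cm_integrable (h : C(S × (∀ i, A i), ℝ)) (ρ : Measure (S × (∀ i, A i)))
    [IsFiniteMeasure ρ] : Integrable (⇑h) ρ :=
  (BoundedContinuousFunction.mkOfCompact h).integrable ρ

theorem Xi_continuous'
    (μ : Measure S) [IsProbabilityMeasure μ]
    (ahat : ℕ → ∀ i, Measure (S × A i)) (alim : ∀ i, Measure (S × A i))
    (hprobn : ∀ n i, IsProbabilityMeasure (ahat n i))
    (hprob : ∀ i, IsProbabilityMeasure (alim i))
    (hmargn : ∀ n i, (ahat n i).map Prod.fst = μ)
    (hmarg : ∀ i, (alim i).map Prod.fst = μ)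
    (abar : ℕ → Measure (S × (∀ i, A i))) (abarlim : Measure (S × (∀ i, A i)))
    (hprobbarn : ∀ n, IsProbabilityMeasure (abar n))
    (hprobbar : IsProbabilityMeasure abarlim)
    (hXin : ∀ n, ∀ s : S, 0 < μ {s} →
      ∀ B : ∀ i, Set (A i), (∀ i, MeasurableSet (B i)) →
        abar n ({s} ×ˢ Set.univ.pi B) =
          μ {s} * ∏ i, (ahat n i ({s} ×ˢ B i) / μ {s}))
    (hXi : ∀ s : S, 0 < μ {s} →
      ∀ B : ∀ i, Set (A i), (∀ i, MeasurableSet (B i)) →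
        abarlim ({s} ×ˢ Set.univ.pi B) =
          μ {s} * ∏ i, (alim i ({s} ×ˢ B i) / μ {s}))
    (hweak : ∀ i, ∀ g : BoundedContinuousFunction (S × A i) ℝ,
      Tendsto (fun n => ∫ p, g p ∂(ahat n i)) atTop (𝓝 (∫ p, g p ∂(alim i)))) :
    ∀ g : BoundedContinuousFunction (S × (∀ i, A i)) ℝ,
      Tendsto (fun n => ∫ p, g p ∂(abar n)) atTop (𝓝 (∫ p, g p ∂abarlim)) := by
  haveI := hprobbar
  have hne : Nonempty (S × (∀ i, A i)) := by
    obtain ⟨p, -⟩ := nonempty_of_measure_ne_zero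
      (show abarlim Set.univ ≠ 0 by simp)
    exact ⟨p⟩
  haveI : Nonempty (∀ i, A i) := ⟨hne.some.2⟩
  intro g
  -- convergence holds on the span of pure tensors
  have hspan : ∀ h : C(S × (∀ i, A i), ℝ),
      h ∈ Submodule.span ℝ (pureTensors (S := S) (A := A)) →
      Tendsto (fun n => ∫ p, h p ∂(abar n)) atTop (𝓝 (∫ p, h p ∂abarlim)) := by
    intro h hh
    induction hh using Submodule.span_induction with
    | mem t ht =>
      obtain ⟨φ, f, e⟩ := ht
      have En : ∀ n, ∫ p, t p ∂(abar n)
          = ∑ s : S, φ s * ((μ {s}).toReal *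
            ∏ i, ((μ {s}).toReal⁻¹ *
              ∫ p in ({s} ×ˢ (Set.univ : Set (A i))), f i p.2 ∂(ahat n i))) := by
        intro n
        haveI := hprobbarn n
        rw [show (fun p : S × (∀ i, A i) => t p)
            = fun p => φ p.1 * ∏ i, f i (p.2 i) from funext e]
        exact tensor_integral μ (abar n) (ahat n) (hprobn n) (hmargn n) (hXin n) φ f
      have Elim : ∫ p, t p ∂abarlim
          = ∑ s : S, φ s * ((μ {s}).toReal *
            ∏ i, ((μ {s}).toReal⁻¹ *
              ∫ p in ({s} ×ˢ (Set.univ : Set (A i))), f i p.2 ∂(alim i))) := by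
        rw [show (fun p : S × (∀ i, A i) => t p)
            = fun p => φ p.1 * ∏ i, f i (p.2 i) from funext e]
        exact tensor_integral μ abarlim alim hprob hmarg hXi φ f
      simp only [En, Elim]
      refine tendsto_finset_sum _ fun s _ => ?_
      refine Tendsto.const_mul _ (Tendsto.const_mul _ ?_)
      refine tendsto_finset_prod _ fun i _ => ?_
      exact Tendsto.const_mul _ (factor_tendsto ahat alim hweak i s (f i))
    | zero => simp only [ContinuousMap.coe_zero, Pi.zero_apply, integral_zero]
              exact tendsto_const_nhds
    | add t u ht hu htt hut =>
      have eq1 : ∀ ρ : Measure (S × (∀ i, A i)), IsProbabilityMeasure ρ →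
          ∫ p, (t + u) p ∂ρ = (∫ p, t p ∂ρ) + ∫ p, u p ∂ρ := by
        intro ρ hρ
        haveI := hρ
        simp only [ContinuousMap.add_apply]
        exact integral_add (cm_integrable t ρ) (cm_integrable u ρ)
      simp only [fun n => eq1 (abar n) (hprobbarn n), eq1 abarlim hprobbar]
      exact htt.add hut
    | smul r t ht htt =>
      have eq1 : ∀ ρ : Measure (S × (∀ i, A i)),
          ∫ p, (r • t) p ∂ρ = r * ∫ p, t p ∂ρ := by
        intro ρ
        simp only [ContinuousMap.coe_smul, Pi.smul_apply, smul_eq_mul]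
        exact integral_const_mul r _
      simp only [eq1]
      exact htt.const_mul r
  -- ε/3 argument via Stone–Weierstrass
  rw [Metric.tendsto_atTop]
  intro ε hε
  obtain ⟨h, hnear⟩ := ContinuousMap.exists_mem_subalgebra_near_continuousMap_of_separatesPoints
    (tensorAlg (S := S) (A := A)) (tensorAlg_separates) g.toContinuousMap (ε/4) (by linarith)
  have hmem : (h : C(S × (∀ i, A i), ℝ)) ∈
      Submodule.span ℝ (pureTensors (S := S) (A := A)) := h.2
  have hpt : ∀ p, ‖g p - (h : C(S × (∀ i, A i), ℝ)) p‖ ≤ ε/4 := by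
    intro p
    have h1 := ContinuousMap.norm_coe_le_norm
      ((h : C(S × (∀ i, A i), ℝ)) - g.toContinuousMap) p
    have h2 : ((h : C(S × (∀ i, A i), ℝ)) - g.toContinuousMap) p
        = (h : C(S × (∀ i, A i), ℝ)) p - g p := rfl
    rw [h2] at h1
    rw [norm_sub_rev]
    exact h1.trans (le_of_lt hnear)
  have hbound : ∀ ρ : Measure (S × (∀ i, A i)), IsProbabilityMeasure ρ →
      dist (∫ p, g p ∂ρ) (∫ p, (h : C(S × (∀ i, A i), ℝ)) p ∂ρ) ≤ ε/4 := by
    intro ρ hρ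
    haveI := hρ
    rw [dist_eq_norm, ← integral_sub (g.integrable ρ) (cm_integrable _ ρ)]
    calc ‖∫ p, (g p - (h : C(S × (∀ i, A i), ℝ)) p) ∂ρ‖
        ≤ ε/4 * (ρ Set.univ).toReal :=
          norm_integral_le_of_norm_le_const (Filter.Eventually.of_forall hpt)
      _ = ε/4 := by simp
  have hconv := hspan (h : C(S × (∀ i, A i), ℝ)) hmem
  rw [Metric.tendsto_atTop] at hconv
  obtain ⟨N, hN⟩ := hconv (ε/4) (by linarith)
  refine ⟨N, fun n hn => ?_⟩
  calc dist (∫ p, g p ∂(abar n)) (∫ p, g p ∂abarlim)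
      ≤ dist (∫ p, g p ∂(abar n)) (∫ p, (h : C(S × (∀ i, A i), ℝ)) p ∂(abar n))
        + dist (∫ p, (h : C(S × (∀ i, A i), ℝ)) p ∂(abar n))
            (∫ p, (h : C(S × (∀ i, A i), ℝ)) p ∂abarlim)
        + dist (∫ p, (h : C(S × (∀ i, A i), ℝ)) p ∂abarlim) (∫ p, g p ∂abarlim) :=
        dist_triangle4 _ _ _ _
    _ < ε/4 + ε/4 + ε/4 := by
        have b1 := hbound (abar n) (hprobbarn n)
        have b2 := hN n hn
        have b3 := hbound abarlim hprobbar
        rw [dist_comm] at b3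
        exact add_lt_add_of_lt_of_le (add_lt_add_of_le_of_lt b1 b2) b3
    _ < ε := by linarith

end thm


/-- Let `S` be finite and `A 1, …, A m` compact Polish spaces; fix
a probability measure `μ` on `S`. The reconstruction map `Ξ^μ`, defined on
tuples `(â^1, …, â^m)` of probability measures on `S × A i` with `S`-marginal
`μ` by `Ξ^μ[â]({s} × Π B i) = μ{s} ∏ i, â^i(B i | s)`, is continuous for the
weak topologies: if `â_n^i → â^i` weakly for each `i`, and `ā_n`, `ā` are the
measures given by the reconstruction formula from `â_n` resp. `â`, then
`ā_n → ā` weakly. -/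
theorem Xi_continuous
    {m : ℕ}
    {S : Type*} [Fintype S] [TopologicalSpace S] [DiscreteTopology S]
    [MeasurableSpace S] [BorelSpace S]
    {A : Fin m → Type*} [∀ i, TopologicalSpace (A i)] [∀ i, PolishSpace (A i)]
    [∀ i, CompactSpace (A i)] [∀ i, MeasurableSpace (A i)] [∀ i, BorelSpace (A i)]
    (μ : Measure S) [IsProbabilityMeasure μ]
    (ahat : ℕ → ∀ i, Measure (S × A i)) (alim : ∀ i, Measure (S × A i))
    (hprobn : ∀ n i, IsProbabilityMeasure (ahat n i))
    (hprob : ∀ i, IsProbabilityMeasure (alim i))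
    (hmargn : ∀ n i, (ahat n i).map Prod.fst = μ)
    (hmarg : ∀ i, (alim i).map Prod.fst = μ)
    (abar : ℕ → Measure (S × (∀ i, A i))) (abarlim : Measure (S × (∀ i, A i)))
    (hprobbarn : ∀ n, IsProbabilityMeasure (abar n))
    (hprobbar : IsProbabilityMeasure abarlim)
    -- the reconstruction formula on measurable rectangles, for `μ{s} > 0`:
    (hXin : ∀ n, ∀ s : S, 0 < μ {s} →
      ∀ B : ∀ i, Set (A i), (∀ i, MeasurableSet (B i)) →
        abar n ({s} ×ˢ Set.univ.pi B) =
          μ {s} * ∏ i, (ahat n i ({s} ×ˢ B i) / μ {s}))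
    (hXi : ∀ s : S, 0 < μ {s} →
      ∀ B : ∀ i, Set (A i), (∀ i, MeasurableSet (B i)) →
        abarlim ({s} ×ˢ Set.univ.pi B) =
          μ {s} * ∏ i, (alim i ({s} ×ˢ B i) / μ {s}))
    -- weak convergence of the inputs:
    (hweak : ∀ i, ∀ g : BoundedContinuousFunction (S × A i) ℝ,
      Tendsto (fun n => ∫ p, g p ∂(ahat n i)) atTop (𝓝 (∫ p, g p ∂(alim i)))) :
    -- weak convergence of the reconstructed joint measures:
    ∀ g : BoundedContinuousFunction (S × (∀ i, A i)) ℝ,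
      Tendsto (fun n => ∫ p, g p ∂(abar n)) atTop (𝓝 (∫ p, g p ∂abarlim)) :=
  Xi_continuous' μ ahat alim hprobn hprob hmargn hmarg abar abarlim hprobbarn hprobbar
    hXin hXi hweak
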